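/- arXiv:1403.2840 — 9 statements merged into one kernel-verified Lean document; each statement's English description precedes it below -/
import Mathlib

section
/- If h : ℤ → ℤ is a C2-admissible numerical function with parameter s, and for 1 ≤ i ≤ s we set k_i = #{n ∈ ℤ : h(n) ≥ s+1-i}, then the sequence k_1, k_2, ..., k_s is a strictly increasing sequence of positive integers: 0 < k_1 < k_2 < ... < k_s. -/
def C2Admissible (h : ℤ → ℤ) (s : ℤ) : Prop :=
  1 ≤ s ∧ (∀ n < 0, h n = 0) ∧ (∀ n, 0 ≤ n → n ≤ s - 1 → h n = n + 1) ∧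
  (∀ n, s - 1 ≤ n → h (n + 1) ≤ h n) ∧ (∃ N, ∀ n ≥ N, h n = 0)

def DecreasingType (h : ℤ → ℤ) : Prop :=
  ∀ a, h (a + 1) < h a → ∀ n, a ≤ n → h (n + 1) < h n ∨ h n = 0

noncomputable def genus (h : ℤ → ℤ) : ℤ :=
  ∑ᶠ n : ℤ, if 2 ≤ n then (n - 1) * h n else 0

def hCI (m n ℓ : ℤ) : ℤ :=
  if 0 ≤ ℓ ∧ ℓ ≤ m - 1 then ℓ + 1
  else if m - 1 ≤ ℓ ∧ ℓ ≤ n - 1 then m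
  else if n - 1 ≤ ℓ ∧ ℓ ≤ m + n - 1 then m + n - 1 - ℓ
  else 0

theorem biliaison_type_strictly_increasing (h : ℤ → ℤ) (s : ℤ)
    (hadm : C2Admissible h s) (k : ℤ → ℤ)
    (hk : ∀ i, 1 ≤ i → i ≤ s → k i = ({n : ℤ | s + 1 - i ≤ h n}.ncard : ℤ)) :
    0 < k 1 ∧ ∀ i, 1 ≤ i → i < s → k i < k (i + 1) := by
  obtain ⟨hs, hneg, hinit, hdec, N, hN⟩ := hadm
  have hfin : ∀ c : ℤ, 1 ≤ c → ({n : ℤ | c ≤ h n}).Finite := by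
    intro c hc
    apply (Set.finite_Ico (0:ℤ) N).subset
    intro n hn
    simp only [Set.mem_setOf_eq] at hn
    simp only [Set.mem_Ico]
    constructor
    · by_contra hlt
      push_neg at hlt
      have := hneg n hlt
      omega
    · by_contra hlt
      push_neg at hlt
      have := hN n (by omega)
      omega
  constructor
  · rw [hk 1 le_rfl hs]
    have hmem : (s - 1) ∈ {n : ℤ | s + 1 - 1 ≤ h n} := by
      have := hinit (s - 1) (by omega) (by omega)
      simp only [Set.mem_setOf_eq]
      omega
    have : 0 < ({n : ℤ | s + 1 - 1 ≤ h n}).ncard :=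
      (Set.ncard_pos (hfin _ (by omega))).2 ⟨_, hmem⟩
    exact_mod_cast this
  · intro i hi1 his
    rw [hk i hi1 (by omega), hk (i + 1) (by omega) (by omega)]
    have hss : {n : ℤ | s + 1 - i ≤ h n} ⊂ {n : ℤ | s + 1 - (i + 1) ≤ h n} := by
      constructor
      · intro n hn
        simp only [Set.mem_setOf_eq] at *
        omega
      · intro hsub
        have hmem : (s - i - 1) ∈ {n : ℤ | s + 1 - (i + 1) ≤ h n} := by
          have := hinit (s - i - 1) (by omega) (by omega)
          simp only [Set.mem_setOf_eq]
          omega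
        have := hsub hmem
        simp only [Set.mem_setOf_eq] at this
        have := hinit (s - i - 1) (by omega) (by omega)
        omega
    have := Set.ncard_lt_ncard hss (hfin _ (by omega))
    exact_mod_cast this
end

section
/- If h : ℤ → ℤ is a C2-admissible numerical function with parameter s and biliaison type (k_1,...,k_s) where k_i = #{n ∈ ℤ : h(n) ≥ s+1-i}, then the genus formulas agree: ∑_{n ≥ 2} (n-1)·h(n) = 1 + ∑_{i=1}^{s} k_i(k_i-3)/2 + ∑_{i=1}^{s} (s-i)·k_i. -/
lemma sumlin (a : ℤ) : ∀ b : ℤ, a - 1 ≤ b →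
    2 * ∑ n ∈ Finset.Icc a b, (n - 1) = b * (b - 1) - (a - 1) * (a - 2) := by
  refine Int.le_induction ?_ ?_
  · rw [show Finset.Icc a (a-1) = ∅ by rw [Finset.Icc_eq_empty]; omega]
    simp; ring
  · intro b hb ih
    rw [show Finset.Icc a (b+1) = insert (b+1) (Finset.Icc a b) by
      ext x; simp [Finset.mem_Icc]; omega]
    rw [Finset.sum_insert (by simp)]
    rw [mul_add, ih]
    ring

theorem genus_formulas_agree (h : ℤ → ℤ) (s : ℤ)
    (hadm : C2Admissible h s) (k : ℤ → ℤ)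
    (hk : ∀ i, 1 ≤ i → i ≤ s → k i = ({n : ℤ | s + 1 - i ≤ h n}.ncard : ℤ)) :
    2 * (∑ᶠ n : ℤ, if 2 ≤ n then (n - 1) * h n else 0) =
      2 + (∑ i ∈ Finset.Icc (1 : ℤ) s, k i * (k i - 3))
        + 2 * ∑ i ∈ Finset.Icc (1 : ℤ) s, (s - i) * k i := by
  obtain ⟨hs, hneg, hinit, hdec, N0, hN0⟩ := hadm
  set N := max N0 (s + 1) with hN
  have hNz : ∀ n, N ≤ n → h n = 0 := fun n hn => hN0 n (by omega)
  have hNs : s + 1 ≤ N := le_max_right _ _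
  have hmono : ∀ m, s - 1 ≤ m → ∀ n, m ≤ n → h n ≤ h m := by
    intro m hm
    refine Int.le_induction ?_ ?_
    · exact le_rfl
    · intro n hn ih
      exact le_trans (hdec n (by omega)) ih
  have hpos : ∀ n, 0 ≤ h n := by
    intro n
    rcases lt_or_ge n 0 with h0 | h0
    · rw [hneg n h0]
    rcases le_or_gt n (s-1) with h1 | h1
    · rw [hinit n h0 h1]; omega
    · have h2 := hmono n (by omega) (max n N) (le_max_left _ _)
      rwa [hNz _ (le_max_right _ _)] at h2
  have hle : ∀ n, h n ≤ s := by
    intro n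
    rcases lt_or_ge n 0 with h0 | h0
    · rw [hneg n h0]; omega
    rcases le_or_gt n (s-1) with h1 | h1
    · rw [hinit n h0 h1]; omega
    · have h2 := hmono (s-1) le_rfl n (by omega)
      rw [hinit (s-1) (by omega) le_rfl] at h2
      omega
  -- the right endpoints of the level sets
  have hEex : ∀ j, 1 ≤ j → j ≤ s →
      ∃ Ej, j - 1 ≤ Ej ∧ Ej ≤ N ∧ {n : ℤ | j ≤ h n} = Set.Icc (j-1) Ej := by
    intro j hj1 hjs
    have hmem : j - 1 ∈ (Finset.Icc (j-1) N).filter (fun n => j ≤ h n) := by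
      simp only [Finset.mem_filter, Finset.mem_Icc]
      refine ⟨⟨le_rfl, by omega⟩, ?_⟩
      rw [hinit (j-1) (by omega) (by omega)]; omega
    obtain ⟨M, hM1, hM2, hM3, hM4⟩ :
        ∃ M, j - 1 ≤ M ∧ M ≤ N ∧ j ≤ h M ∧
          ∀ x, j - 1 ≤ x → x ≤ N → j ≤ h x → x ≤ M := by
      have hne : ((Finset.Icc (j-1) N).filter (fun n => j ≤ h n)).Nonempty := ⟨_, hmem⟩
      have hmax := Finset.max'_mem _ hne
      simp only [Finset.mem_filter, Finset.mem_Icc] at hmax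
      refine ⟨_, hmax.1.1, hmax.1.2, hmax.2, ?_⟩
      intro x hx1 hx2 hx3
      exact Finset.le_max' _ x (by
        simp only [Finset.mem_filter, Finset.mem_Icc]
        exact ⟨⟨hx1, hx2⟩, hx3⟩)
    refine ⟨M, hM1, hM2, ?_⟩
    ext n
    simp only [Set.mem_setOf_eq, Set.mem_Icc]
    constructor
    · intro hn
      have hn1 : j - 1 ≤ n := by
        by_contra hc
        push_neg at hc
        rcases lt_or_ge n 0 with h0 | h0
        · rw [hneg n h0] at hn; omega
        · rw [hinit n h0 (by omega)] at hn; omega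
      have hnN : n ≤ N := by
        by_contra hc; push_neg at hc
        rw [hNz n (by omega)] at hn; omega
      exact ⟨hn1, hM4 n hn1 hnN hn⟩
    · rintro ⟨hn1, hn2⟩
      rcases le_or_gt n (s-1) with hc | hc
      · rw [hinit n (by omega) hc]; omega
      · have h2 := hmono n (by omega) M hn2
        omega
  choose! E hE1 hE2 hE3 using hEex
  -- value of k
  have hkval : ∀ i, 1 ≤ i → i ≤ s → k i = E (s+1-i) - (s-i) + 1 := by
    intro i h1 h2
    rw [hk i h1 h2]
    have h3 := hE3 (s+1-i) (by omega) (by omega)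
    have h4 := hE1 (s+1-i) (by omega) (by omega)
    rw [show {n : ℤ | s + 1 - i ≤ h n} = Set.Icc (s+1-i-1) (E (s+1-i)) from h3]
    rw [← Finset.coe_Icc, Set.ncard_coe_finset, Int.card_Icc,
      Int.toNat_of_nonneg (by omega)]
    omega
  -- rewrite the finsum as a finite sum
  have hsupp : (Function.support fun n : ℤ => if 2 ≤ n then (n - 1) * h n else 0)
      ⊆ ↑(Finset.Icc (2:ℤ) N) := by
    intro n hn
    simp only [Function.mem_support, ne_eq] at hn
    simp only [Finset.coe_Icc, Set.mem_Icc]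
    by_contra hc
    rw [not_and_or] at hc
    apply hn
    rcases le_or_gt 2 n with h2 | h2
    · have hn' : N < n := by rcases hc with hc | hc <;> omega
      rw [if_pos h2, hNz n (by omega), mul_zero]
    · rw [if_neg (by omega)]
  rw [finsum_eq_sum_of_support_subset _ hsupp]
  rw [Finset.sum_congr rfl (fun n hn => if_pos ((Finset.mem_Icc.1 hn).1) :
    ∀ n ∈ Finset.Icc (2:ℤ) N, (if 2 ≤ n then (n-1) * h n else 0) = (n-1) * h n)]
  -- expand h n as a sum of indicators
  have hv : ∀ n ∈ Finset.Icc (2:ℤ) N,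
      (n-1) * h n = ∑ j ∈ Finset.Icc (1:ℤ) s, (if j ≤ h n then (n-1) else 0) := by
    intro n _
    have hfil : (Finset.Icc (1:ℤ) s).filter (fun j => j ≤ h n) = Finset.Icc 1 (h n) := by
      ext j
      simp only [Finset.mem_filter, Finset.mem_Icc]
      have := hle n
      omega
    rw [← Finset.sum_filter, hfil, Finset.sum_const, nsmul_eq_mul,
      Int.card_Icc, Int.toNat_of_nonneg (by have := hpos n; omega)]
    ring
  rw [Finset.sum_congr rfl hv, Finset.sum_comm]
  -- compute the inner sums
  have hinner : ∀ j ∈ Finset.Icc (1:ℤ) s,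
      2 * ∑ n ∈ Finset.Icc (2:ℤ) N, (if j ≤ h n then (n-1) else 0)
      = E j * (E j - 1) - (j-2)*(j-3) + (if j = 1 then 2 else 0) := by
    intro j hj
    rw [Finset.mem_Icc] at hj
    have hE1' := hE1 j hj.1 hj.2
    have hE2' := hE2 j hj.1 hj.2
    have hE3' := hE3 j hj.1 hj.2
    have hset : ∀ n : ℤ, j ≤ h n ↔ (j - 1 ≤ n ∧ n ≤ E j) := by
      intro n
      have := Set.ext_iff.1 hE3' n
      simpa [Set.mem_Icc] using this
    rw [← Finset.sum_filter]
    have hfil : (Finset.Icc (2:ℤ) N).filter (fun n => j ≤ h n)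
        = Finset.Icc (max 2 (j-1)) (E j) := by
      ext n
      simp only [Finset.mem_filter, Finset.mem_Icc, max_le_iff]
      rw [hset n]
      omega
    rw [hfil]
    rcases le_or_gt (max 2 (j-1) - 1) (E j) with hcase | hcase
    · rw [sumlin _ _ hcase]
      rcases le_or_gt j 2 with hle2 | hgt2
      · rw [show max (2:ℤ) (j-1) = 2 from max_eq_left (by omega)]
        have : j = 1 ∨ j = 2 := by omega
        rcases this with rfl | rfl
        · norm_num
        · norm_num
      · rw [show max (2:ℤ) (j-1) = j - 1 from max_eq_right (by omega)]
        rw [if_neg (by omega)]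
        ring
    · have hm := max_choice (2:ℤ) (j-1)
      have hj1E : j = 1 ∧ E j = 0 := by
        rcases hm with hm | hm <;> omega
      obtain ⟨rfl, hE0⟩ := hj1E
      rw [Finset.Icc_eq_empty (by have := le_max_left (2:ℤ) (1-1); omega)]
      rw [hE0]
      norm_num
  rw [Finset.mul_sum, Finset.sum_congr rfl hinner, Finset.sum_add_distrib]
  rw [Finset.sum_ite_eq' (Finset.Icc (1:ℤ) s) 1 (fun _ => (2:ℤ))]
  rw [if_pos (by simp only [Finset.mem_Icc]; omega)]
  -- now handle the RHS
  have hRHS : (∑ i ∈ Finset.Icc (1:ℤ) s, k i * (k i - 3))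
      + 2 * ∑ i ∈ Finset.Icc (1:ℤ) s, (s-i)*k i
      = ∑ j ∈ Finset.Icc (1:ℤ) s, (E j * (E j - 1) - (j-2)*(j-3)) := by
    rw [Finset.mul_sum, ← Finset.sum_add_distrib]
    refine Finset.sum_nbij' (fun i => s+1-i) (fun j => s+1-j) ?_ ?_ ?_ ?_ ?_
    · intro a ha; simp only [Finset.mem_Icc] at *; omega
    · intro a ha; simp only [Finset.mem_Icc] at *; omega
    · intro a _; ring
    · intro a _; ring
    · intro i hi
      rw [Finset.mem_Icc] at hi
      rw [hkval i hi.1 hi.2]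
      ring
  omega
end

section
/- Let h : ℤ → ℤ be a C2-admissible numerical function with parameter s and biliaison type (k_1,...,k_s) where k_i = #{n ∈ ℤ : h(n) ≥ s+1-i}. Then h is of decreasing type if and only if k_{i+1} ≤ k_i + 2 for all 1 ≤ i ≤ s-1 (i.e., the biliaison type has no gaps). -/
section Aux

variable {h : ℤ → ℤ} {s : ℤ}

lemma aux_mono (hs : 1 ≤ s) (hmono : ∀ n, s - 1 ≤ n → h (n + 1) ≤ h n) :
    ∀ m n : ℤ, s - 1 ≤ m → m ≤ n → h n ≤ h m := by
  intro m n hm hmn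
  have key : ∀ d : ℕ, h (m + d) ≤ h m := by
    intro d
    induction d with
    | zero => simp
    | succ d ih =>
      have h1 : h (m + d + 1) ≤ h (m + d) := hmono (m + d) (by omega)
      have he : (m + ((d : ℕ) + 1 : ℕ) : ℤ) = m + d + 1 := by push_cast; ring
      rw [he]
      exact h1.trans ih
  have he : n = m + ((n - m).toNat : ℤ) := by omega
  rw [he]
  exact key _

lemma aux_exists_greatest (hadm : C2Admissible h s) :
    ∀ c, 1 ≤ c → c ≤ s → ∃ t, s - 1 ≤ t ∧ c ≤ h t ∧ ∀ n, c ≤ h n → n ≤ t := by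
  obtain ⟨hs, hneg, hinit, hmono, N, hN⟩ := hadm
  intro c hc hcs
  have hs1 : h (s - 1) = s := by
    have := hinit (s - 1) (by omega) le_rfl
    omega
  have hbdd : ∃ b : ℤ, ∀ z : ℤ, c ≤ h z → z ≤ b := by
    refine ⟨N, fun z hz => ?_⟩
    by_contra hlt
    have := hN z (by omega)
    omega
  have hinh : ∃ z : ℤ, c ≤ h z := ⟨s - 1, by omega⟩
  obtain ⟨t, ht1, ht2⟩ := Int.exists_greatest_of_bdd hbdd hinh
  refine ⟨t, ?_, ht1, ht2⟩
  exact ht2 (s - 1) (by omega)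

lemma aux_set_eq (hadm : C2Admissible h s) {c t : ℤ} (hc : 1 ≤ c) (hcs : c ≤ s)
    (ht0 : s - 1 ≤ t) (ht1 : c ≤ h t) (ht2 : ∀ n, c ≤ h n → n ≤ t) :
    {n : ℤ | c ≤ h n} = ↑(Finset.Icc (c - 1) t) := by
  obtain ⟨hs, hneg, hinit, hmono, N, hN⟩ := hadm
  ext n
  simp only [Set.mem_setOf_eq, Finset.coe_Icc, Set.mem_Icc]
  constructor
  · intro hn
    refine ⟨?_, ht2 n hn⟩
    by_contra hlt
    push_neg at hlt
    rcases lt_or_ge n 0 with hn0 | hn0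
    · have := hneg n hn0; omega
    · rcases le_or_gt n (s - 1) with hns | hns
      · have := hinit n hn0 hns; omega
      · omega
  · rintro ⟨hn1, hn2⟩
    rcases le_or_gt n (s - 1) with hns | hns
    · have := hinit n (by omega) hns; omega
    · have := aux_mono hs hmono n t (by omega) hn2
      omega

lemma aux_k_eq (hadm : C2Admissible h s) (k : ℤ → ℤ)
    (hk : ∀ i, 1 ≤ i → i ≤ s → k i = ({n : ℤ | s + 1 - i ≤ h n}.ncard : ℤ))
    {i c t : ℤ} (hi1 : 1 ≤ i) (hi2 : i ≤ s) (hci : c = s + 1 - i)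
    (ht0 : s - 1 ≤ t) (ht1 : c ≤ h t) (ht2 : ∀ n, c ≤ h n → n ≤ t) :
    k i = t - c + 2 := by
  have hc : 1 ≤ c := by omega
  have hcs : c ≤ s := by omega
  have := hk i hi1 hi2
  rw [← hci] at this
  rw [this, aux_set_eq hadm hc hcs ht0 ht1 ht2, Set.ncard_coe_finset, Int.card_Icc]
  rw [Int.toNat_of_nonneg (by omega)]
  ring

end Aux

theorem decreasing_type_iff_no_gaps (h : ℤ → ℤ) (s : ℤ)
    (hadm : C2Admissible h s) (k : ℤ → ℤ)
    (hk : ∀ i, 1 ≤ i → i ≤ s → k i = ({n : ℤ | s + 1 - i ≤ h n}.ncard : ℤ)) :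
    DecreasingType h ↔ ∀ i, 1 ≤ i → i ≤ s - 1 → k (i + 1) ≤ k i + 2 := by
  obtain ⟨hs, hneg, hinit, hmono, N, hN⟩ := hadm
  have hadm' : C2Admissible h s := ⟨hs, hneg, hinit, hmono, N, hN⟩
  have hmono' := aux_mono hs hmono
  have hbound : ∀ n, s - 1 ≤ n → h n ≤ s := by
    intro n hn
    have h1 : h (s - 1) = s := by have := hinit (s - 1) (by omega) le_rfl; omega
    have := hmono' (s - 1) n le_rfl hn
    omega
  constructor
  · -- decreasing type → no gaps
    intro hdec i hi1 hi2
    set c : ℤ := s + 1 - i with hc_def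
    have hc2 : 2 ≤ c := by omega
    have hcs : c ≤ s := by omega
    obtain ⟨t, ht0, ht1, ht2⟩ := aux_exists_greatest hadm' c (by omega) hcs
    obtain ⟨t', ht0', ht1', ht2'⟩ := aux_exists_greatest hadm' (c - 1) (by omega) (by omega)
    have hki : k i = t - c + 2 := aux_k_eq hadm' k hk hi1 (by omega) rfl ht0 ht1 ht2
    have hki' : k (i + 1) = t' - (c - 1) + 2 :=
      aux_k_eq hadm' k hk (by omega) (by omega) (by omega) ht0' ht1' ht2'
    -- suffices t' ≤ t + 1
    rw [hki, hki']
    by_contra hcon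
    push_neg at hcon
    have htt : t + 2 ≤ t' := by omega
    -- h (t+1) ≤ c - 1, h (t+2) ≥ c - 1
    have h1 : h (t + 1) ≤ c - 1 := by
      by_contra hx
      have := ht2 (t + 1) (by omega)
      omega
    have h2 : c - 1 ≤ h (t + 1 + 1) := by
      have := hmono' (t + 1 + 1) t' (by omega) (by omega)
      omega
    have h3 : h (t + 1 + 1) ≤ h (t + 1) := hmono (t + 1) (by omega)
    -- drop at t, but h(t+1) = h(t+2) = c - 1 ≥ 1
    have hdrop : h (t + 1) < h t := by omega
    rcases hdec t hdrop (t + 1) (by omega) with hlt | h0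
    · omega
    · omega
  · -- no gaps → decreasing type
    intro hgap a hdrop n hn
    -- a ≥ s - 1
    have ha : s - 1 ≤ a := by
      by_contra hx
      push_neg at hx
      rcases lt_or_ge a (-1) with h1 | h1
      · have := hneg a (by omega)
        have := hneg (a + 1) (by omega)
        omega
      · have := hinit (a + 1) (by omega) (by omega)
        rcases lt_or_ge a 0 with h2 | h2
        · have := hneg a h2; omega
        · have := hinit a h2 (by omega); omega
    by_cases h0 : h n = 0
    · exact Or.inr h0
    left
    by_contra hx
    push_neg at hx
    have hn1 : s - 1 ≤ n := by omega
    have heq : h (n + 1) = h n := le_antisymm (hmono n hn1) hx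
    -- h n ≥ 1
    have hpos : 1 ≤ h n := by
      have hM : h (max (n + 1) N) = 0 := hN _ (le_max_right _ _)
      have := hmono' n (max (n + 1) N) hn1 (by omega)
      omega
    set v : ℤ := h n with hv_def
    -- v ≤ s - 1
    have hvs : v ≤ s - 1 := by
      have h2 : h a ≤ s := hbound a ha
      rcases eq_or_lt_of_le hn with rfl | han
      · omega
      · have h1 : h n ≤ h (a + 1) := hmono' (a + 1) n (by omega) (by omega)
        omega
    set c : ℤ := v + 1 with hc_def
    have hc2 : 2 ≤ c := by omega
    have hcs : c ≤ s := by omega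
    obtain ⟨t, ht0, ht1, ht2⟩ := aux_exists_greatest hadm' c (by omega) hcs
    obtain ⟨t', ht0', ht1', ht2'⟩ := aux_exists_greatest hadm' (c - 1) (by omega) (by omega)
    -- use gap hypothesis at i = s + 1 - c
    have hki : k (s + 1 - c) = t - c + 2 :=
      aux_k_eq hadm' k hk (by omega) (by omega) (by omega) ht0 ht1 ht2
    have hki' : k (s + 1 - c + 1) = t' - (c - 1) + 2 :=
      aux_k_eq hadm' k hk (by omega) (by omega) (by omega) ht0' ht1' ht2'
    have hg := hgap (s + 1 - c) (by omega) (by omega)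
    rw [hki, hki'] at hg
    -- so t' ≤ t + 1
    have htt : t' ≤ t + 1 := by omega
    -- but t' ≥ n + 1 and t ≤ n - 1
    have h1 : n + 1 ≤ t' := ht2' (n + 1) (by omega)
    have h2 : t ≤ n - 1 := by
      by_contra hy
      push_neg at hy
      have := hmono' n t hn1 (by omega)
      omega
    omega
end

section
/- Let 1 ≤ m ≤ n be integers, let h_1 be a C2-admissible numerical function with parameter m, and define h_2(ℓ) = h_{m,n}(ℓ) - h_1(m+n-2-ℓ) for all ℓ ∈ ℤ, where h_{m,n} is the complete intersection h-vector of type m × n. If h_2 is C2-admissible (with some parameter s_2 ≥ 1), then h_2(ℓ) = 0 for all ℓ ≥ n-1; equivalently, b_2 := sup{ℓ : h_2(ℓ) > 0} satisfies b_2 ≤ n-2. -/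
theorem linked_b2_le (m n s₂ : ℤ) (hm : 1 ≤ m) (hmn : m ≤ n)
    (h₁ h₂ : ℤ → ℤ) (hh₁ : C2Admissible h₁ m)
    (hdef : ∀ ℓ, h₂ ℓ = hCI m n ℓ - h₁ (m + n - 2 - ℓ))
    (hh₂ : C2Admissible h₂ s₂) :
    ∀ ℓ, n - 1 ≤ ℓ → h₂ ℓ = 0 := by
  obtain ⟨-, hneg, hinit, -, -⟩ := hh₁
  intro ℓ hℓ
  rw [hdef]
  rcases le_or_gt ℓ (m + n - 2) with hle | hgt
  · have h1 : h₁ (m + n - 2 - ℓ) = (m + n - 2 - ℓ) + 1 := hinit _ (by omega) (by omega)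
    unfold hCI
    split_ifs <;> omega
  · have h1 : h₁ (m + n - 2 - ℓ) = 0 := hneg _ (by omega)
    unfold hCI
    split_ifs <;> omega
end

section
/- Let 1 ≤ m ≤ n be integers, let h_1 be a C2-admissible numerical function with parameter s_1 = m, and define h_2(ℓ) = h_{m,n}(ℓ) - h_1(m+n-2-ℓ). Suppose h_2 is C2-admissible with parameter s_2 < m. Then h_1(n-1) > 0; in particular, b_1 := sup{ℓ : h_1(ℓ) > 0} satisfies n ≤ b_1 + 1, and hence b_2 := sup{ℓ : h_2(ℓ) > 0} satisfies b_2 < b_1. -/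
lemma c2_anti (h : ℤ → ℤ) (s a b : ℤ) (hd : ∀ n, s - 1 ≤ n → h (n + 1) ≤ h n)
    (ha : s - 1 ≤ a) (hab : a ≤ b) : h b ≤ h a := by
  exact Int.leInduction (motive := fun b _ => h b ≤ h a) (le_refl _)
    (fun b hb ih => le_trans (hd b (le_trans ha hb)) ih) b hab

theorem linked_b2_lt_b1 (m n s₂ : ℤ) (hm : 1 ≤ m) (hmn : m ≤ n)
    (h₁ h₂ : ℤ → ℤ) (hh₁ : C2Admissible h₁ m)
    (hdef : ∀ ℓ, h₂ ℓ = hCI m n ℓ - h₁ (m + n - 2 - ℓ))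
    (hh₂ : C2Admissible h₂ s₂) (hs₂ : s₂ < m) :
    0 < h₁ (n - 1) ∧ n ≤ sSup {ℓ : ℤ | 0 < h₁ ℓ} + 1 ∧
      sSup {ℓ : ℤ | 0 < h₂ ℓ} < sSup {ℓ : ℤ | 0 < h₁ ℓ} := by
  obtain ⟨hs1, hz1, hv1, hd1, N1, hN1⟩ := hh₁
  obtain ⟨hs2, hz2, hv2, hd2, N2, hN2⟩ := hh₂
  -- h₂ at m-1
  have hCIm : hCI m n (m - 1) = m := by unfold hCI; split_ifs <;> omega
  have h2m : h₂ (m - 1) = m - h₁ (n - 1) := by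
    have := hdef (m - 1)
    rw [hCIm] at this
    have : m + n - 2 - (m - 1) = n - 1 := by ring
    rw [hdef (m - 1), hCIm, this]
  have hle : h₂ (m - 1) ≤ h₂ (s₂ - 1) :=
    c2_anti h₂ s₂ (s₂ - 1) (m - 1) hd2 le_rfl (by omega)
  have hval : h₂ (s₂ - 1) = s₂ := by
    have := hv2 (s₂ - 1) (by omega) (by omega); omega
  have hpos : 0 < h₁ (n - 1) := by omega
  -- h₂ vanishes for ℓ ≥ n - 1
  have key : ∀ ℓ : ℤ, n - 1 ≤ ℓ → h₂ ℓ = 0 := by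
    intro ℓ hl
    have hval1 : h₁ (m + n - 2 - ℓ) =
        if 0 ≤ m + n - 2 - ℓ then m + n - 1 - ℓ else 0 := by
      split_ifs with h
      · have := hv1 (m + n - 2 - ℓ) h (by omega); omega
      · exact hz1 _ (by omega)
    rw [hdef, hval1]
    unfold hCI
    split_ifs <;> omega
  -- sSup facts
  have hbdd1 : BddAbove {ℓ : ℤ | 0 < h₁ ℓ} := by
    refine ⟨N1, fun ℓ hℓ => ?_⟩
    by_contra hc
    have := hN1 ℓ (by omega)
    simp only [Set.mem_setOf_eq] at hℓ
    omega
  have hb1 : n - 1 ≤ sSup {ℓ : ℤ | 0 < h₁ ℓ} :=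
    le_csSup hbdd1 (by simpa using hpos)
  have hne2 : ({ℓ : ℤ | 0 < h₂ ℓ}).Nonempty := by
    refine ⟨0, ?_⟩
    have := hv2 0 le_rfl (by omega)
    simp only [Set.mem_setOf_eq]
    omega
  have hb2 : sSup {ℓ : ℤ | 0 < h₂ ℓ} ≤ n - 2 := by
    apply csSup_le hne2
    intro ℓ hℓ
    simp only [Set.mem_setOf_eq] at hℓ
    by_contra hc
    have := key ℓ (by omega)
    omega
  exact ⟨hpos, by omega, by omega⟩
end

section
/- Let 1 ≤ m ≤ n be integers with m < n, let h_1 be a C2-admissible numerical function with parameter s_1 = m which is of decreasing type, and define h_2(ℓ) = h_{m,n}(ℓ) - h_1(m+n-2-ℓ). Suppose h_2 is C2-admissible with parameter s_2 < m. Then h_2(m) < s_2; in particular the second ideal degree t_2 := inf{ℓ ≥ s_2 : h_2(ℓ) < s_2} satisfies t_2 ≤ m. -/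
lemma exists_drop (h : ℤ → ℤ) (a : ℤ) :
    ∀ b, a ≤ b → h b < h a → ∃ c, a ≤ c ∧ c < b ∧ h (c + 1) < h c := by
  refine Int.le_induction ?_ ?_
  · exact fun hlt => absurd hlt (lt_irrefl _)
  · intro b hb ih hlt
    rcases lt_or_ge (h b) (h a) with h1 | h1
    · obtain ⟨c, hc1, hc2, hc3⟩ := ih h1
      exact ⟨c, hc1, by linarith, hc3⟩
    · exact ⟨b, hb, by linarith, by linarith⟩

lemma anti_chain (h : ℤ → ℤ) (s a : ℤ) (hmono : ∀ n, s ≤ n → h (n + 1) ≤ h n)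
    (ha : s ≤ a) : ∀ b, a ≤ b → h b ≤ h a := by
  refine Int.le_induction ?_ ?_
  · exact le_rfl
  · intro b hb ih
    have := hmono b (by linarith)
    linarith

theorem linked_t2_le_m (m n s₂ : ℤ) (hm : 1 ≤ m) (hmn : m < n)
    (h₁ h₂ : ℤ → ℤ) (hh₁ : C2Admissible h₁ m) (hdec : DecreasingType h₁)
    (hdef : ∀ ℓ, h₂ ℓ = hCI m n ℓ - h₁ (m + n - 2 - ℓ))
    (hh₂ : C2Admissible h₂ s₂) (hs₂ : s₂ < m) :
    h₂ m < s₂ ∧ sInf {ℓ : ℤ | s₂ ≤ ℓ ∧ h₂ ℓ < s₂} ≤ m := by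
  obtain ⟨hs1, hneg1, hinit1, hmono1, _⟩ := hh₁
  obtain ⟨hs2, hneg2, hinit2, hmono2, _⟩ := hh₂
  have key : h₂ m < s₂ := by
    by_contra hc
    push_neg at hc
    -- h₂ is nonincreasing on [s₂-1, ∞)
    have hmono2' : ∀ a b : ℤ, s₂ - 1 ≤ a → a ≤ b → h₂ b ≤ h₂ a :=
      fun a b ha hab => anti_chain h₂ (s₂ - 1) a hmono2 ha b hab
    have hval : h₂ (s₂ - 1) = s₂ := by
      have := hinit2 (s₂ - 1) (by linarith) (by linarith); linarith
    have hflat : ∀ ℓ, s₂ - 1 ≤ ℓ → ℓ ≤ m → h₂ ℓ = s₂ := by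
      intro ℓ h1 h2'
      have hu := hmono2' (s₂ - 1) ℓ le_rfl h1
      have hl := hmono2' ℓ m (by linarith) h2'
      linarith
    have hCIm1 : hCI m n (m - 1) = m := by
      unfold hCI
      rw [if_pos ⟨by linarith, le_rfl⟩]
      ring
    have hCIm : hCI m n m = m := by
      unfold hCI
      rw [if_neg (by intro ⟨_, h⟩; linarith), if_pos ⟨by linarith, by linarith⟩]
    have e1 : h₁ (n - 1) = m - s₂ := by
      have hd := hdef (m - 1)
      have heq : m + n - 2 - (m - 1) = n - 1 := by ring
      rw [hCIm1, heq, hflat (m - 1) (by linarith) (by linarith)] at hd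
      linarith
    have e2 : h₁ (n - 2) = m - s₂ := by
      have hd := hdef m
      have heq : m + n - 2 - m = n - 2 := by ring
      rw [hCIm, heq, hflat m (by linarith) le_rfl] at hd
      linarith
    have hm1v : h₁ (m - 1) = m := by
      have := hinit1 (m - 1) (by linarith) (by linarith); linarith
    rcases eq_or_lt_of_le (show m + 1 ≤ n by linarith) with hn | hn
    · -- n = m + 1 : h₁ (n-2) = h₁ (m-1) = m but also m - s₂
      have : n - 2 = m - 1 := by omega
      rw [this, hm1v] at e2
      linarith
    · obtain ⟨c, hc1, hc2, hc3⟩ :=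
        exists_drop h₁ (m - 1) (n - 2) (by linarith) (by rw [e2, hm1v]; linarith)
      rcases hdec c hc3 (n - 2) (by linarith) with h | h
      · have : n - 2 + 1 = n - 1 := by ring
        rw [this, e1, e2] at h
        exact absurd h (lt_irrefl _)
      · rw [e2] at h; linarith
  refine ⟨key, csInf_le ⟨s₂, fun x hx => hx.1⟩ ⟨by linarith, key⟩⟩
end

section
/- Let 1 ≤ s ≤ t be integers. Define h_s(n) = n+1 for 0 ≤ n ≤ s-1 and 0 otherwise; h_t(n) = n+1 for 0 ≤ n ≤ t-1 and 0 otherwise; and h_U(n) = n+1 for 0 ≤ n ≤ t-1, h_U(n) = t+s-n for t ≤ n ≤ t+s-1, and 0 otherwise. Let G(h) = ∑_{n ≥ 2} (n-1)·h(n). Then G(h_U) - G(h_s) - G(h_t) + 1 = C(s+1,2)·t - C(s+1,3), where C(·,·) denotes binomial coefficients. -/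
private lemma genus_eq_sum (h : ℤ → ℤ) (N : ℕ)
    (hv : ∀ n : ℤ, (N : ℤ) ≤ n → h n = 0) :
    genus h = ∑ k ∈ Finset.range N,
      (if 2 ≤ (k : ℤ) then ((k : ℤ) - 1) * h k else 0) := by
  unfold genus
  rw [finsum_eq_sum_of_support_subset _
    (s := (Finset.range N).map ⟨(Nat.cast : ℕ → ℤ), Nat.cast_injective⟩)]
  · rw [Finset.sum_map]
    rfl
  · intro x hx
    simp only [Function.mem_support] at hx
    have h2 : 2 ≤ x := by
      by_contra hc
      exact hx (if_neg hc)
    have hxN : x < (N : ℤ) := by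
      by_contra hc
      push_neg at hc
      rw [if_pos h2, hv x hc, mul_zero] at hx
      exact hx rfl
    simp only [Finset.coe_map, Set.mem_image, Finset.mem_coe, Finset.mem_range,
      Function.Embedding.coeFn_mk]
    exact ⟨x.toNat, by omega, by omega⟩

private lemma sum_id (s : ℕ) : 2 * ∑ k ∈ Finset.range s, (k : ℤ) = s * (s - 1) := by
  induction s with
  | zero => simp
  | succ n ih =>
    rw [Finset.sum_range_succ]
    push_cast
    push_cast at ih
    linear_combination ih

private lemma sum_sq (s : ℕ) : 6 * ∑ k ∈ Finset.range s, (k : ℤ) ^ 2 =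
    s * (s - 1) * (2 * s - 1) := by
  induction s with
  | zero => simp
  | succ n ih =>
    rw [Finset.sum_range_succ]
    push_cast
    push_cast at ih
    linear_combination ih

private lemma choose2 (s : ℕ) : 2 * ((s + 1).choose 2 : ℤ) = (s + 1) * s := by
  induction s with
  | zero => simp
  | succ n ih =>
    rw [Nat.choose_succ_succ (n + 1) 1]
    push_cast [Nat.choose_one_right]
    push_cast at ih
    linear_combination ih

private lemma choose3 (s : ℕ) : 6 * ((s + 1).choose 3 : ℤ) = (s + 1) * s * (s - 1) := by
  induction s with
  | zero => decide
  | succ n ih =>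
    rw [Nat.choose_succ_succ (n + 1) 2]
    push_cast
    push_cast at ih
    have h2 := choose2 n
    linear_combination ih + 3 * h2

theorem intersection_number_Cs_Ct (s t : ℕ) (hs : 1 ≤ s) (hst : s ≤ t)
    (hS hT hU : ℤ → ℤ)
    (hhS : ∀ n, hS n = if 0 ≤ n ∧ n ≤ (s : ℤ) - 1 then n + 1 else 0)
    (hhT : ∀ n, hT n = if 0 ≤ n ∧ n ≤ (t : ℤ) - 1 then n + 1 else 0)
    (hhU : ∀ n, hU n = if 0 ≤ n ∧ n ≤ (t : ℤ) - 1 then n + 1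
      else if (t : ℤ) ≤ n ∧ n ≤ (t : ℤ) + (s : ℤ) - 1 then (t : ℤ) + (s : ℤ) - n else 0) :
    genus hU - genus hS - genus hT + 1 =
      ((s + 1).choose 2 : ℤ) * (t : ℤ) - ((s + 1).choose 3 : ℤ) := by
  have ht : 1 ≤ t := le_trans hs hst
  -- genus hS
  have gS : genus hS = (∑ k ∈ Finset.range s, (k : ℤ) ^ 2) - (s : ℤ) + 1 := by
    rw [genus_eq_sum hS s (fun n hn => by rw [hhS]; split <;> [omega; rfl])]
    have : ∀ k ∈ Finset.range s,
        (if 2 ≤ (k : ℤ) then ((k : ℤ) - 1) * hS k else 0) = (k : ℤ) ^ 2 - 1 +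
          (if k = 0 then 1 else 0) := by
      intro k hk
      rw [Finset.mem_range] at hk
      rw [hhS]
      rcases Nat.eq_zero_or_pos k with h0 | h0
      · subst h0; norm_num
      · rcases eq_or_lt_of_le (show 1 ≤ k from h0) with h1 | h1
        · rw [← h1]; norm_num
        · rw [if_pos (by push_cast; omega), if_pos (by push_cast; omega),
            if_neg (by omega)]
          push_cast
          ring
    rw [Finset.sum_congr rfl this, Finset.sum_add_distrib, Finset.sum_sub_distrib,
      Finset.sum_const, Finset.card_range, Finset.sum_ite_eq' _ 0,
      if_pos (Finset.mem_range.mpr (by omega))]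
    push_cast
    ring
  have gT : genus hT = (∑ k ∈ Finset.range t, (k : ℤ) ^ 2) - (t : ℤ) + 1 := by
    rw [genus_eq_sum hT t (fun n hn => by rw [hhT]; split <;> [omega; rfl])]
    have : ∀ k ∈ Finset.range t,
        (if 2 ≤ (k : ℤ) then ((k : ℤ) - 1) * hT k else 0) = (k : ℤ) ^ 2 - 1 +
          (if k = 0 then 1 else 0) := by
      intro k hk
      rw [Finset.mem_range] at hk
      rw [hhT]
      rcases Nat.eq_zero_or_pos k with h0 | h0
      · subst h0; norm_num
      · rcases eq_or_lt_of_le (show 1 ≤ k from h0) with h1 | h1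
        · rw [← h1]; norm_num
        · rw [if_pos (by push_cast; omega), if_pos (by push_cast; omega),
            if_neg (by omega)]
          push_cast
          ring
    rw [Finset.sum_congr rfl this, Finset.sum_add_distrib, Finset.sum_sub_distrib,
      Finset.sum_const, Finset.card_range, Finset.sum_ite_eq' _ 0,
      if_pos (Finset.mem_range.mpr (by omega))]
    push_cast
    ring
  -- genus hU
  have gU : genus hU = ((∑ k ∈ Finset.range t, (k : ℤ) ^ 2) - (t : ℤ) + 1) +
      ∑ k ∈ Finset.range s, ((t : ℤ) + k - 1) * ((s : ℤ) - k) := by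
    rw [genus_eq_sum hU (t + s) (fun n hn => by
      rw [hhU]; push_cast at hn; split
      · omega
      · split <;> [omega; rfl])]
    rw [Finset.sum_range_add]
    congr 1
    · -- first t terms agree with hT computation
      have : ∀ k ∈ Finset.range t,
          (if 2 ≤ (k : ℤ) then ((k : ℤ) - 1) * hU k else 0) = (k : ℤ) ^ 2 - 1 +
            (if k = 0 then 1 else 0) := by
        intro k hk
        rw [Finset.mem_range] at hk
        rw [hhU]
        rcases Nat.eq_zero_or_pos k with h0 | h0
        · subst h0; norm_num
        · rcases eq_or_lt_of_le (show 1 ≤ k from h0) with h1 | h1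
          · rw [← h1]; norm_num
          · rw [if_pos (by push_cast; omega), if_pos (by push_cast; omega),
              if_neg (by omega)]
            push_cast
            ring
      rw [Finset.sum_congr rfl this, Finset.sum_add_distrib, Finset.sum_sub_distrib,
        Finset.sum_const, Finset.card_range, Finset.sum_ite_eq' _ 0,
        if_pos (Finset.mem_range.mpr (by omega))]
      push_cast
      ring
    · refine Finset.sum_congr rfl fun k hk => ?_
      rw [Finset.mem_range] at hk
      have harg : ((t + k : ℕ) : ℤ) = (t : ℤ) + k := by push_cast; ring
      have hval : hU ((t : ℤ) + k) = (t : ℤ) + s - ((t : ℤ) + k) := by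
        rw [hhU]
        rw [if_neg (by omega), if_pos (by constructor <;> push_cast <;> omega)]
      rw [harg, hval]
      by_cases h2 : 2 ≤ (t : ℤ) + k
      · rw [if_pos h2]; ring
      · rw [if_neg h2]
        have hb : (t : ℤ) = 1 ∧ (k : ℤ) = 0 := by
          constructor <;> [omega; omega]
        rw [hb.1, hb.2]
        ring
  rw [gS, gT, gU]
  have h1 := sum_id s
  have h2 := sum_sq s
  have h3 := choose2 s
  have h4 := choose3 s
  have expand : ∑ k ∈ Finset.range s, ((t : ℤ) + k - 1) * ((s : ℤ) - k) =
      (t : ℤ) * s ^ 2 - (s : ℤ) ^ 2 + ((s : ℤ) - t + 1) * (∑ k ∈ Finset.range s, (k : ℤ))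
        - ∑ k ∈ Finset.range s, (k : ℤ) ^ 2 := by
    rw [Finset.sum_congr rfl (fun (k : ℕ) _ => show ((t : ℤ) + k - 1) * ((s : ℤ) - k) =
      ((t : ℤ) * s - s) + ((s : ℤ) - t + 1) * k - (k : ℤ) ^ 2 from by ring)]
    rw [Finset.sum_sub_distrib, Finset.sum_add_distrib, Finset.sum_const,
      Finset.card_range, ← Finset.mul_sum]
    push_cast
    ring
  rw [expand]
  have key : 6 * ((((∑ k ∈ Finset.range t, (k:ℤ)^2) - t + 1) +
      ((t : ℤ) * s ^ 2 - (s : ℤ) ^ 2 + ((s : ℤ) - t + 1) * (∑ k ∈ Finset.range s, (k : ℤ))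
        - ∑ k ∈ Finset.range s, (k : ℤ) ^ 2) -
      ((∑ k ∈ Finset.range s, (k:ℤ)^2) - s + 1) -
      ((∑ k ∈ Finset.range t, (k:ℤ)^2) - t + 1) + 1)) =
      6 * (((s + 1).choose 2 : ℤ) * (t : ℤ) - ((s + 1).choose 3 : ℤ)) := by
    linear_combination 3 * ((s:ℤ) - t + 1) * h1 - 2 * h2 - 3 * (t:ℤ) * h3 + h4
  linarith [key]
end

section
/- Let k_1 < k_2 < ... < k_s be strictly increasing positive integers with no gaps, i.e., k_{i+1} ≤ k_i + 2 for all 1 ≤ i ≤ s-1. Then the C2-admissible function h with biliaison type (k_1,...,k_s), defined by h(n) = #{i ∈ {1,...,s} : s-i ≤ n ≤ k_i + s - i - 1} for n ≥ 0 and h(n)=0 for n<0, is of decreasing type. -/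
theorem no_gaps_implies_decreasing_type (s : ℤ) (hs : 1 ≤ s) (k : ℤ → ℤ)
    (hpos : ∀ i, 1 ≤ i → i ≤ s → 0 < k i)
    (hmono : ∀ i, 1 ≤ i → i < s → k i < k (i + 1))
    (hnogap : ∀ i, 1 ≤ i → i ≤ s - 1 → k (i + 1) ≤ k i + 2)
    (h : ℤ → ℤ)
    (hdef : ∀ n, h n = if n < 0 then 0 else
      (((Finset.Icc (1 : ℤ) s).filter
        (fun i => s - i ≤ n ∧ n ≤ k i + s - i - 1)).card : ℤ)) :
    DecreasingType h := by
  classical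
  -- the end of the interval attached to index i
  set f : ℤ → ℤ := fun i => k i + s - i - 1 with hfdef
  have hfe : ∀ i, f i = k i + s - i - 1 := fun i => rfl
  set S : ℤ → Finset ℤ := fun n => (Finset.Icc (1 : ℤ) s).filter
    (fun i => s - i ≤ n ∧ n ≤ k i + s - i - 1) with hSdef
  have hmem : ∀ n i : ℤ, i ∈ S n ↔ 1 ≤ i ∧ i ≤ s ∧ s - i ≤ n ∧ n ≤ f i := by
    intro n i
    simp only [hSdef, Finset.mem_filter, Finset.mem_Icc, hfe]
    tauto
  have hcard : ∀ n : ℤ, 0 ≤ n → h n = ((S n).card : ℤ) := by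
    intro n hn
    rw [hdef n, if_neg (not_lt.mpr hn)]
  have hnonneg : ∀ n : ℤ, 0 ≤ h n := by
    intro n
    rw [hdef n]
    split
    · exact le_refl 0
    · exact Int.natCast_nonneg _
  have fstep : ∀ i : ℤ, 1 ≤ i → i + 1 ≤ s → f (i + 1) ≤ f i + 1 := by
    intro i h1 h2
    have := hnogap i h1 (by omega)
    rw [hfe, hfe]
    omega
  have fmono : ∀ i j : ℤ, 1 ≤ i → i ≤ j → j ≤ s → f i ≤ f j := by
    intro i j hi hij
    refine Int.le_induction (motive := fun j _ => j ≤ s → f i ≤ f j) ?_ ?_ j hij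
    · intro _; exact le_refl _
    · intro m hm ih hms
      have h1 : f i ≤ f m := ih (by omega)
      have h2 : f m ≤ f (m + 1) := by
        have := hmono m (by omega) (by omega)
        rw [hfe, hfe]
        omega
      omega
  -- key step: a strict decrease propagates as long as h stays positive
  have key : ∀ b : ℤ, 0 ≤ b → h (b + 1) < h b → 0 < h (b + 1) →
      h (b + 1 + 1) < h (b + 1) := by
    intro b hb hlt hpos
    rw [hcard b hb, hcard (b + 1) (by omega)] at hlt
    rw [hcard (b + 1) (by omega)] at hpos
    rw [hcard (b + 1) (by omega), hcard (b + 1 + 1) (by omega)]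
    have hcardlt : (S (b + 1)).card < (S b).card := by exact_mod_cast hlt
    have hne : (S (b + 1)).Nonempty := Finset.card_pos.mp (by exact_mod_cast hpos)
    -- find i0 with f i0 = b
    have hnsub : ¬ S b ⊆ S (b + 1) := by
      intro hsub
      exact absurd (Finset.card_le_card hsub) (not_le.mpr hcardlt)
    obtain ⟨i0, hi0S, hi0n⟩ := Finset.not_subset.mp hnsub
    rw [hmem] at hi0S
    obtain ⟨hi01, hi0s, hi0l, hi0u⟩ := hi0S
    have hfi0 : f i0 = b := by
      by_contra hne'
      have hge : b + 1 ≤ f i0 := by omega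
      exact hi0n ((hmem _ _).mpr ⟨hi01, hi0s, by omega, hge⟩)
    -- a witness in S (b+1)
    obtain ⟨j0, hj0⟩ := hne
    rw [hmem] at hj0
    obtain ⟨hj01, hj0s, hj0l, hj0u⟩ := hj0
    -- the least index with f ≥ b+1
    set T : Finset ℤ := (Finset.Icc (1 : ℤ) s).filter (fun i => b + 1 ≤ f i) with hTdef
    have hmemT : ∀ i : ℤ, i ∈ T ↔ 1 ≤ i ∧ i ≤ s ∧ b + 1 ≤ f i := by
      intro i
      simp only [hTdef, Finset.mem_filter, Finset.mem_Icc]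
      tauto
    have hTne : T.Nonempty := ⟨j0, (hmemT j0).mpr ⟨hj01, hj0s, hj0u⟩⟩
    set j : ℤ := T.min' hTne with hjdef
    have hjT := T.min'_mem hTne
    rw [← hjdef] at hjT
    rw [hmemT] at hjT
    obtain ⟨hj1, hjs, hju⟩ := hjT
    have hij : i0 < j := by
      by_contra hh
      push_neg at hh
      have := fmono j i0 hj1 hh hi0s
      omega
    have hfj : f j = b + 1 := by
      have h1 : ¬ (b + 1 ≤ f (j - 1)) := by
        intro hge
        have hmm : j - 1 ∈ T := (hmemT _).mpr ⟨by omega, by omega, hge⟩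
        have := T.min'_le _ hmm
        omega
      have h2 : f j ≤ f (j - 1) + 1 := by
        have h3 := fstep (j - 1) (by omega) (by omega)
        have h4 : j - 1 + 1 = j := by ring
        rw [h4] at h3
        exact h3
      omega
    have hjmem : j ∈ S (b + 1) := (hmem _ _).mpr ⟨hj1, hjs, by omega, by omega⟩
    have hjnot : j ∉ S (b + 1 + 1) := by
      intro hmem'
      rw [hmem] at hmem'
      omega
    have hsub2 : S (b + 1 + 1) ⊆ S (b + 1) := by
      intro i hi
      rw [hmem] at hi ⊢
      obtain ⟨h1, h2, h3, h4⟩ := hi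
      refine ⟨h1, h2, ?_, by omega⟩
      by_contra hc
      push_neg at hc
      have := fmono i i0 h1 (by omega) hi0s
      omega
    have hss : S (b + 1 + 1) ⊂ S (b + 1) :=
      (Finset.ssubset_iff_of_subset hsub2).mpr ⟨j, hjmem, hjnot⟩
    exact_mod_cast Finset.card_lt_card hss
  -- main argument
  intro a hlt0 n hn
  have ha0 : (0 : ℤ) ≤ a := by
    by_contra hneg
    push_neg at hneg
    have h1 : h a = 0 := by rw [hdef a, if_pos hneg]
    have h2 : 0 ≤ h (a + 1) := hnonneg _
    omega
  refine Int.le_induction (motive := fun n _ => h (n + 1) < h n ∨ h n = 0) ?_ ?_ n hn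
  · exact Or.inl hlt0
  · intro m hm ih
    rcases ih with hlt | hz
    · by_cases hz1 : h (m + 1) = 0
      · exact Or.inr hz1
      · have hposm : 0 < h (m + 1) := lt_of_le_of_ne (hnonneg _) (Ne.symm hz1)
        exact Or.inl (key m (by omega) hlt hposm)
    · right
      have hm0 : (0 : ℤ) ≤ m := by omega
      have hcm : ((S m).card : ℤ) = 0 := by rw [← hcard m hm0]; exact hz
      have hSm : S m = ∅ := Finset.card_eq_zero.mp (by exact_mod_cast hcm)
      have hfs : f s < m := by
        by_contra hc
        push_neg at hc
        have hmm : s ∈ S m := (hmem _ _).mpr ⟨hs, le_refl s, by omega, hc⟩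
        rw [hSm] at hmm
        exact absurd hmm (Finset.notMem_empty s)
      have hSm1 : S (m + 1) = ∅ := by
        rw [Finset.eq_empty_iff_forall_notMem]
        intro i hi
        rw [hmem] at hi
        obtain ⟨h1, h2, h3, h4⟩ := hi
        have := fmono i s h1 h2 (le_refl s)
        omega
      rw [hcard (m + 1) (by omega), hSm1]
      simp
end

section
/- Let s ≥ 1, 1 ≤ m ≤ n integers with m = s. Suppose h_1 is a C2-admissible function of decreasing type with parameter m and h_2(ℓ) = h_{m,n}(ℓ) - h_1(m+n-2-ℓ) is C2-admissible with parameter s_2 ≤ m. Let t_1 = inf{ℓ ≥ m : h_1(ℓ) < m}, b_2 = sup{ℓ : h_2(ℓ) > 0}, s_1 = m. If the 'gap condition' t_1 - s_1 ≥ b_2 + 3 fails and likewise t_2 - s_2 ≥ b_1 + 3 fails (with t_2, b_1 defined analogously), then the h-vector h_{m,n} of the complete intersection has genus ∑_{ℓ≥2}(ℓ-1)h_{m,n}(ℓ) at least as large as ∑_{ℓ≥2}(ℓ-1)h(ℓ) for any C2-admissible h of decreasing type with parameter ≥ m and ∑_ℓ h(ℓ) = m·n. -/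
section AuxLemmas
open Finset

lemma myIoc_succ_top (a b : ℤ) (h : a ≤ b) : Ioc a (b+1) = insert (b+1) (Ioc a b) := by
  ext x; simp only [mem_Ioc, mem_insert]; omega

lemma mySum_Ioc_succ_top (f : ℤ → ℤ) (a b : ℤ) (h : a ≤ b) :
    ∑ k ∈ Ioc a (b+1), f k = (∑ k ∈ Ioc a b, f k) + f (b+1) := by
  rw [myIoc_succ_top a b h, Finset.sum_insert (by simp only [mem_Ioc]; omega)]
  ring

lemma mySum_Ioc_split (f : ℤ → ℤ) {a b c : ℤ} (hab : a ≤ b) (hbc : b ≤ c) :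
    ∑ k ∈ Ioc a c, f k = (∑ k ∈ Ioc a b, f k) + ∑ k ∈ Ioc b c, f k := by
  rw [← Finset.sum_union (by simp only [Finset.disjoint_left, mem_Ioc]; omega),
    Finset.Ioc_union_Ioc_eq_Ioc hab hbc]

noncomputable def Sg (a : ℤ) (t : ℕ) : ℤ := ∑ k ∈ Ioc a (a + t), (a + t + 1 - k)

lemma Sg_zero (a : ℤ) : Sg a 0 = 0 := by simp [Sg]

lemma myCard_Ioc (a : ℤ) (t : ℕ) : (Ioc a (a + (t:ℤ))).card = t := by
  rw [Int.card_Ioc]; omega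

lemma Sg_succ (a : ℤ) (t : ℕ) : Sg a (t+1) = Sg a t + (t+1) := by
  unfold Sg
  have h1 : a + ((t:ℕ)+1:ℕ) = (a + t) + 1 := by push_cast; ring
  rw [h1, mySum_Ioc_succ_top _ a (a+t) (by omega)]
  have h2 : ∑ k ∈ Ioc a (a + t), (a + (t:ℤ) + 1 + 1 - k)
      = ∑ k ∈ Ioc a (a + t), ((a + t + 1 - k) + 1) := by
    apply Finset.sum_congr rfl; intro k _; ring
  rw [h2, Finset.sum_add_distrib, Finset.sum_const, myCard_Ioc]
  ring

lemma Sg_indep (t : ℕ) (a a' : ℤ) : Sg a t = Sg a' t := by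
  induction t with
  | zero => rw [Sg_zero, Sg_zero]
  | succ t ih => rw [Sg_succ, Sg_succ, ih]

lemma Sg_rev (a : ℤ) (t : ℕ) : ∑ k ∈ Ioc a (a + t), (k - a) = Sg a t := by
  induction t with
  | zero => simp [Sg_zero]
  | succ t ih =>
    have h1 : a + ((t:ℕ)+1:ℕ) = (a + t) + 1 := by push_cast; ring
    rw [h1, mySum_Ioc_succ_top _ a (a+t) (by omega), ih, Sg_succ]
    ring

lemma Sg_sq (a : ℤ) (t : ℕ) : Sg a (t+1) + Sg a t = ((t:ℤ)+1)*((t:ℤ)+1) := by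
  induction t with
  | zero => rw [Sg_succ, Sg_zero]; norm_num
  | succ t ih =>
    rw [Sg_succ] at ih
    rw [Sg_succ, Sg_succ (t := t)]
    push_cast at ih ⊢; nlinarith [ih]



section Struct

variable {h : ℤ → ℤ} {s : ℤ} (hh : C2Admissible h s)

include hh

lemma adm_mono {x y : ℤ} (hx : s - 1 ≤ x) (hxy : x ≤ y) : h y ≤ h x := by
  obtain ⟨hs, h0, hr, hmono, hfin⟩ := id hh
  exact Int.le_induction (motive := fun y _ => h y ≤ h x) le_rfl
    (fun k hk ih => le_trans (hmono k (by omega)) ih) y hxy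

lemma adm_nonneg (k : ℤ) : 0 ≤ h k := by
  obtain ⟨hs, h0, hr, hmono, N, hN⟩ := id hh
  rcases lt_or_ge k 0 with hk | hk
  · rw [h0 k hk]
  rcases le_or_gt k (s-1) with hk2 | hk2
  · rw [hr k hk hk2]; omega
  · have h1 : h (max N (k+1)) ≤ h k := adm_mono hh (by omega) (by omega)
    rw [hN _ (le_max_left _ _)] at h1
    omega

lemma adm_top : h (s - 1) = s := by
  obtain ⟨hs, h0, hr, hmono, hfin⟩ := id hh
  rw [hr (s-1) (by omega) le_rfl]; ring

lemma adm_drop_exists {x y : ℤ} (hx : s - 1 ≤ x) (hxy : x ≤ y) (hlt : h y < h x) :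
    ∃ a, x ≤ a ∧ a < y ∧ h (a + 1) < h a := by
  refine Int.le_induction
    (motive := fun y _ => h y < h x → ∃ a, x ≤ a ∧ a < y ∧ h (a+1) < h a)
    (fun hl => absurd hl (lt_irrefl _)) ?_ y hxy hlt
  intro k hk ih hl
  rcases lt_or_ge (h k) (h x) with h1 | h1
  · obtain ⟨a, ha1, ha2, ha3⟩ := ih h1
    exact ⟨a, ha1, by omega, ha3⟩
  · exact ⟨k, hk, by omega, by omega⟩

end Struct

section Struct2

variable {h : ℤ → ℤ} {s : ℤ} (hh : C2Admissible h s) (hdec : DecreasingType h)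

include hh hdec

lemma adm_tail {ℓ : ℤ} (hℓ : s - 1 ≤ ℓ) (hv : h ℓ < s) :
    ∀ k, ℓ ≤ k → h k ≤ max (h ℓ - (k - ℓ)) 0 := by
  have hℓ' : s - 1 < ℓ := by
    rcases eq_or_lt_of_le hℓ with he | hlt
    · exfalso; rw [← he, adm_top hh] at hv; omega
    · exact hlt
  have hv' : h ℓ < h (s-1) := by rw [adm_top hh]; exact hv
  obtain ⟨a, ha1, ha2, ha3⟩ := adm_drop_exists hh le_rfl (by omega) hv'
  intro k hk
  refine Int.le_induction (motive := fun k _ => h k ≤ max (h ℓ - (k - ℓ)) 0)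
    (by have := adm_nonneg hh ℓ; omega) ?_ k hk
  intro k hk ih
  have hnn := adm_nonneg hh (k+1)
  rcases hdec a ha3 k (by omega) with hcase | hcase
  · omega
  · have : h (k+1) ≤ h k := hh.2.2.2.1 k (by omega)
    omega

lemma adm_backward {ℓ : ℤ} (hℓ : s - 1 ≤ ℓ) (hv : 1 ≤ h ℓ) :
    ∀ k, s - 1 ≤ k → k ≤ ℓ → min s (h ℓ + ℓ - k) ≤ h k := by
  have key : ∀ k, k ≤ ℓ → s - 1 ≤ k → min s (h ℓ + ℓ - k) ≤ h k := by
    refine Int.le_induction_down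
      (motive := fun k _ => s - 1 ≤ k → min s (h ℓ + ℓ - k) ≤ h k) (fun _ => by omega) ?_
    intro k hk ih hk'
    have h1 : h k ≤ h (k - 1) := by
      have := hh.2.2.2.1 (k-1) (by omega)
      simpa using this
    have hik : min s (h ℓ + ℓ - k) ≤ h k := ih (by omega)
    rcases le_or_gt s (h (k-1)) with hbig | hsmall
    · omega
    · have hv2 : h (k-1) < h (s-1) := by rw [adm_top hh]; exact hsmall
      obtain ⟨a, ha1, ha2, ha3⟩ := adm_drop_exists hh le_rfl (by omega) hv2
      have hpos : h ℓ ≤ h (k-1) := adm_mono hh (by omega) (by omega)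
      rcases hdec a ha3 (k-1) (by omega) with hcase | hcase
      · simp only [sub_add_cancel] at hcase; omega
      · omega
  intro k h1 h2; exact key k h2 h1

end Struct2


lemma hCI_minform {m n : ℤ} (hm : 1 ≤ m) (hmn : m ≤ n) (k : ℤ) :
    hCI m n k = max 0 (min (k+1) (min m (m+n-1-k))) := by
  unfold hCI
  split_ifs <;> omega

lemma hCI_nonneg {m n : ℤ} (hm : 1 ≤ m) (hmn : m ≤ n) (k : ℤ) : 0 ≤ hCI m n k := by
  rw [hCI_minform hm hmn]; exact le_max_left _ _

lemma hCI_mass {m n B : ℤ} (hm : 1 ≤ m) (hmn : m ≤ n) (hB : m + n - 2 ≤ B) :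
    ∑ k ∈ Ioc (-1) B, hCI m n k = m * n := by
  have h1 : (-1:ℤ) ≤ m - 1 := by omega
  have h2 : m - 1 ≤ n - 1 := by omega
  have h3 : n - 1 ≤ m + n - 2 := by omega
  rw [mySum_Ioc_split _ (by omega : (-1:ℤ) ≤ m+n-2) (by omega : m+n-2 ≤ B),
      mySum_Ioc_split _ (by omega : (-1:ℤ) ≤ n-1) h3,
      mySum_Ioc_split _ h1 h2]
  have S4 : ∑ k ∈ Ioc (m+n-2) B, hCI m n k = 0 := by
    apply Finset.sum_eq_zero; intro k hk
    simp only [mem_Ioc] at hk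
    rw [hCI_minform hm hmn]; omega
  have S1 : ∑ k ∈ Ioc (-1) (m-1), hCI m n k = Sg (-1) m.toNat := by
    rw [← Sg_rev]
    have e : (-1:ℤ) + m.toNat = m - 1 := by omega
    rw [e]
    apply Finset.sum_congr rfl; intro k hk
    simp only [mem_Ioc] at hk
    rw [hCI_minform hm hmn]; omega
  have S2 : ∑ k ∈ Ioc (m-1) (n-1), hCI m n k = (n - m) * m := by
    have e : ∀ k ∈ Ioc (m-1) (n-1), hCI m n k = m := by
      intro k hk; simp only [mem_Ioc] at hk
      rw [hCI_minform hm hmn]; omega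
    rw [Finset.sum_congr rfl e, Finset.sum_const, Int.card_Ioc, nsmul_eq_mul]
    rw [Int.toNat_of_nonneg (by omega)]; ring
  have S3 : ∑ k ∈ Ioc (n-1) (m+n-2), hCI m n k = Sg (n-1) (m.toNat - 1) := by
    unfold Sg
    have e : (n-1) + ((m.toNat - 1 : ℕ) : ℤ) = m + n - 2 := by omega
    rw [e]
    apply Finset.sum_congr rfl; intro k hk
    simp only [mem_Ioc] at hk
    rw [hCI_minform hm hmn]; omega
  rw [S1, S2, S3, S4]
  rw [Sg_indep m.toNat (-1) (n-1)]
  have hM : Sg (n-1) m.toNat = Sg (n-1) ((m.toNat - 1) + 1) := by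
    congr 1; omega
  rw [hM]
  have hsq := Sg_sq (n-1) (m.toNat - 1)
  have hc : ((m.toNat - 1 : ℕ) : ℤ) + 1 = m := by omega
  rw [hc] at hsq
  linear_combination hsq

lemma tails_eq (f : ℤ → ℤ) (b : ℤ) (hb : 0 ≤ b) :
    ∑ ℓ ∈ Ioc 0 b, (∑ k ∈ Ioc ℓ b, f k) = ∑ k ∈ Ioc 1 b, (k - 1) * f k := by
  refine Int.le_induction
    (motive := fun b _ => ∑ ℓ ∈ Ioc 0 b, (∑ k ∈ Ioc ℓ b, f k) = ∑ k ∈ Ioc 1 b, (k - 1) * f k)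
    (by simp) ?_ b hb
  intro b hb ih
  rcases eq_or_lt_of_le hb with rfl | hb1
  · have e0 : Ioc (0:ℤ) (0+1) = {1} := by ext x; simp only [mem_Ioc, mem_singleton]; omega
    have e1 : Ioc (1:ℤ) (0+1) = ∅ := by ext x; simp only [mem_Ioc, Finset.notMem_empty, iff_false]; omega
    rw [e0, e1]
    simp
  rw [mySum_Ioc_succ_top (fun ℓ => ∑ k ∈ Ioc ℓ (b+1), f k) 0 b hb]
  rw [mySum_Ioc_succ_top (fun k => (k-1) * f k) 1 b (by omega)]
  have e1 : ∀ ℓ ∈ Ioc 0 b, ∑ k ∈ Ioc ℓ (b+1), f k = (∑ k ∈ Ioc ℓ b, f k) + f (b+1) := by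
    intro ℓ hℓ; simp only [mem_Ioc] at hℓ
    exact mySum_Ioc_succ_top f ℓ b hℓ.2
  rw [Finset.sum_congr rfl e1, Finset.sum_add_distrib, Finset.sum_const, Int.card_Ioc,
      nsmul_eq_mul, ih]
  have : Ioc (b+1) (b+1) = ∅ := by simp
  rw [this]
  simp only [Finset.sum_empty]
  rw [Int.toNat_of_nonneg (by omega)]
  ring

lemma key_tail_le {h : ℤ → ℤ} {s m n B : ℤ} (hm : 1 ≤ m) (hmn : m ≤ n) (hsm : m ≤ s)
    (hh : C2Admissible h s) (hdec : DecreasingType h)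
    (hmass : ∑ k ∈ Ioc (-1) B, h k = m * n)
    (hB : m + n ≤ B)
    {ℓ : ℤ} (hℓ0 : 0 < ℓ) (hℓB : ℓ ≤ B) :
    ∑ k ∈ Ioc ℓ B, h k ≤ ∑ k ∈ Ioc ℓ B, hCI m n k := by
  have hs1 : 1 ≤ s := hh.1
  have hciMass : ∑ k ∈ Ioc (-1) B, hCI m n k = m * n := hCI_mass hm hmn (by omega)
  have Hcomp : (∀ k ∈ Ioc (-1) ℓ, hCI m n k ≤ h k) →
      ∑ k ∈ Ioc ℓ B, h k ≤ ∑ k ∈ Ioc ℓ B, hCI m n k := by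
    intro hp
    have e1 := mySum_Ioc_split h (show (-1:ℤ) ≤ ℓ by omega) hℓB
    have e2 := mySum_Ioc_split (hCI m n) (show (-1:ℤ) ≤ ℓ by omega) hℓB
    have e3 : ∑ k ∈ Ioc (-1) ℓ, hCI m n k ≤ ∑ k ∈ Ioc (-1) ℓ, h k := Finset.sum_le_sum hp
    omega
  rcases le_or_gt ℓ (s-2) with hcase | hℓs
  · apply Hcomp; intro k hk; simp only [mem_Ioc] at hk
    rcases lt_or_ge k 0 with hk0 | hk0
    · rw [hh.2.1 k hk0, hCI_minform hm hmn]; omega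
    · rw [hh.2.2.1 k hk0 (by omega), hCI_minform hm hmn]; omega
  rcases le_or_gt (h ℓ) 0 with hv0 | hv1
  · have hz : ∀ k ∈ Ioc ℓ B, h k = 0 := by
      intro k hk
      simp only [mem_Ioc] at hk
      have h1 := adm_mono hh (x := ℓ) (by omega) hk.1.le
      have h2 := adm_nonneg hh k; omega
    rw [Finset.sum_eq_zero hz]
    exact Finset.sum_nonneg (fun k _ => hCI_nonneg hm hmn k)
  rcases le_or_gt m (h ℓ) with hvm | hvm1
  · apply Hcomp; intro k hk; simp only [mem_Ioc] at hk
    rcases lt_or_ge k 0 with hk0 | hk0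
    · rw [hh.2.1 k hk0, hCI_minform hm hmn]; omega
    rcases le_or_gt k (s-1) with hk1 | hk1
    · rw [hh.2.2.1 k hk0 hk1, hCI_minform hm hmn]; omega
    · have h1 := adm_mono hh (x := k) (by omega) hk.2
      rw [hCI_minform hm hmn]; omega
  rcases le_or_gt (m+n-1) (h ℓ + ℓ) with hbig | hsmall
  · apply Hcomp; intro k hk; simp only [mem_Ioc] at hk
    rcases lt_or_ge k 0 with hk0 | hk0
    · rw [hh.2.1 k hk0, hCI_minform hm hmn]; omega
    rcases le_or_gt k (s-1) with hk1 | hk1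
    · rw [hh.2.2.1 k hk0 hk1, hCI_minform hm hmn]; omega
    · have hbw := adm_backward hh hdec (by omega) (by omega) k (by omega) hk.2
      rw [hCI_minform hm hmn]; omega
  · set v := h ℓ with hv
    have htail := adm_tail hh hdec (by omega : s - 1 ≤ ℓ) (by omega)
    set t : ℕ := (v-1).toNat with ht
    have htz : (t:ℤ) = v - 1 := by omega
    have split1 : ∑ k ∈ Ioc ℓ B, h k = (∑ k ∈ Ioc ℓ (ℓ+t), h k) + ∑ k ∈ Ioc (ℓ+t) B, h k :=
      mySum_Ioc_split h (by omega) (by omega)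
    have z2 : ∑ k ∈ Ioc (ℓ+t) B, h k = 0 := by
      apply Finset.sum_eq_zero
      intro k hk
      simp only [mem_Ioc] at hk
      have h1 := htail k (by omega)
      have h2 := adm_nonneg hh k
      omega
    have b1 : ∑ k ∈ Ioc ℓ (ℓ+t), h k ≤ Sg ℓ t := by
      unfold Sg
      apply Finset.sum_le_sum
      intro k hk; simp only [mem_Ioc] at hk
      have h1 := htail k (by omega)
      omega
    have subset1 : Ioc (m+n-1-v) ((m+n-1-v)+(t:ℤ)) ⊆ Ioc ℓ B := by
      intro x hx; simp only [mem_Ioc] at hx ⊢; omega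
    have b2 : Sg (m+n-1-v) t ≤ ∑ k ∈ Ioc ℓ B, hCI m n k := by
      have e4 : Sg (m+n-1-v) t = ∑ k ∈ Ioc (m+n-1-v) ((m+n-1-v)+(t:ℤ)), hCI m n k := by
        unfold Sg
        apply Finset.sum_congr rfl
        intro k hk; simp only [mem_Ioc] at hk
        rw [hCI_minform hm hmn]; omega
      rw [e4]
      exact Finset.sum_le_sum_of_subset_of_nonneg subset1 (fun k _ _ => hCI_nonneg hm hmn k)
    have hind := Sg_indep t ℓ (m+n-1-v)
    omega


lemma genus_as_tails {h : ℤ → ℤ} {B : ℤ} (hB0 : 0 ≤ B)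
    (hz : ∀ k, B < k → h k = 0) :
    genus h = ∑ ℓ ∈ Ioc 0 B, ∑ k ∈ Ioc ℓ B, h k := by
  rw [tails_eq h B hB0]
  unfold genus
  have hsupp : (Function.support fun n : ℤ => if 2 ≤ n then (n-1) * h n else 0)
      ⊆ ↑(Ioc (1:ℤ) B) := by
    intro x hx
    simp only [Function.mem_support] at hx
    simp only [coe_Ioc, Set.mem_Ioc]
    constructor
    · by_contra hc
      exact hx (if_neg (by omega))
    · by_contra hc
      apply hx
      rw [hz x (by omega)]
      split <;> ring
  rw [finsum_eq_sum_of_support_subset _ hsupp]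
  apply Finset.sum_congr rfl
  intro k hk; simp only [mem_Ioc] at hk
  rw [if_pos (by omega)]

end AuxLemmas

open Finset in
theorem ci_hvector_maximal_genus (m n s₂ : ℤ) (hm : 1 ≤ m) (hmn : m ≤ n)
    (h₁ h₂ : ℤ → ℤ) (hh₁ : C2Admissible h₁ m) (hdec₁ : DecreasingType h₁)
    (hdef : ∀ ℓ, h₂ ℓ = hCI m n ℓ - h₁ (m + n - 2 - ℓ))
    (hh₂ : C2Admissible h₂ s₂) (hs₂ : s₂ ≤ m)
    (t₁ t₂ b₁ b₂ : ℤ)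
    (ht₁ : t₁ = sInf {ℓ : ℤ | m ≤ ℓ ∧ h₁ ℓ < m})
    (ht₂ : t₂ = sInf {ℓ : ℤ | s₂ ≤ ℓ ∧ h₂ ℓ < s₂})
    (hb₁ : b₁ = sSup {ℓ : ℤ | 0 < h₁ ℓ})
    (hb₂ : b₂ = sSup {ℓ : ℤ | 0 < h₂ ℓ})
    (hgap₁ : ¬ (b₂ + 3 ≤ t₁ - m)) (hgap₂ : ¬ (b₁ + 3 ≤ t₂ - s₂)) :
    ∀ (h : ℤ → ℤ) (s' : ℤ), m ≤ s' → C2Admissible h s' → DecreasingType h →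
      (∑ᶠ ℓ : ℤ, h ℓ) = m * n → genus h ≤ genus (hCI m n) := by
  intro h s' hms' hadm hdec hmass
  obtain ⟨N, hN⟩ := hadm.2.2.2.2
  set B := max (m+n) N with hBdef
  have hB1 : m + n ≤ B := le_max_left _ _
  have hBz : ∀ k, B < k → h k = 0 := by
    intro k hk
    exact hN k (by have := le_max_right (m+n) N; omega)
  have hBzCI : ∀ k, B < k → hCI m n k = 0 := by
    intro k hk
    rw [hCI_minform hm hmn]; omega
  have hsupp : Function.support h ⊆ ↑(Ioc (-1:ℤ) B) := by
    intro x hx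
    simp only [Function.mem_support] at hx
    simp only [coe_Ioc, Set.mem_Ioc]
    constructor
    · by_contra hc; exact hx (hadm.2.1 x (by omega))
    · by_contra hc; exact hx (hBz x (by omega))
  have hmass' : ∑ k ∈ Ioc (-1) B, h k = m * n := by
    rw [← finsum_eq_sum_of_support_subset h hsupp]; exact hmass
  rw [genus_as_tails (by omega) hBz, genus_as_tails (by omega) hBzCI]
  apply Finset.sum_le_sum
  intro ℓ hℓ
  simp only [mem_Ioc] at hℓ
  exact key_tail_le hm hmn hms' hadm hdec hmass' hB1 hℓ.1 hℓ.2
end
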